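/- arXiv:1308.6388 — 5 statements merged into one kernel-verified Lean document; each statement's English description precedes it below -/
import Mathlib

section
/- Let M ≤ N be positive integers, let F : ℝ^{M×N} → ℝ be any function, and let λ_min < 0 < λ_max be real numbers. Define the convex-concave family F_v(X) = F(X) − λ_min·(tr(XᵀX) − tr(JX)) and F_c(X) = F(X) − λ_max·(tr(XᵀX) − tr(JX)), and set ζ_u = λ_min/(λ_min − 1) and ζ_l = −λ_max/(λ_max + 1). Then for every ζ with ζ_l ≤ ζ ≤ ζ_u there exists η ∈ [0,1] such that the set of minimizers over Ω of F_ζ coincides with the set of minimizers over Ω of the function X ↦ (1−η)·F_v(X) + η·F_c(X). (Theorem 1: GNCGCP realizes a convex-concave relaxation procedure.) -/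
open Matrix BigOperators

/-- The set Ω of M×N doubly sub-stochastic matrices with unit row sums. -/
def Omega (M N : ℕ) : Set (Matrix (Fin M) (Fin N) ℝ) :=
  {X | (∀ i j, 0 ≤ X i j) ∧ (∀ i, ∑ j, X i j = 1) ∧ (∀ j, ∑ i, X i j ≤ 1)}

/-- The N×M all-ones matrix J. -/
def Jmat (M N : ℕ) : Matrix (Fin N) (Fin M) ℝ := fun _ _ => 1

/-- The GNCGCP objective F_ζ. -/
noncomputable def Fzeta {M N : ℕ} (F : Matrix (Fin M) (Fin N) ℝ → ℝ) (ζ : ℝ)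
    (X : Matrix (Fin M) (Fin N) ℝ) : ℝ :=
  if 0 ≤ ζ then (1 - ζ) * F X + ζ * (Xᵀ * X).trace
  else (1 + ζ) * F X + ζ * (Xᵀ * X).trace

/-- Set of minimizers of `G` over `S`. -/
def minimizersOn {E : Type*} (S : Set E) (G : E → ℝ) : Set E :=
  {X ∈ S | ∀ Y ∈ S, G X ≤ G Y}

lemma min_congr {E : Type*} (S : Set E) (G₁ G₂ : E → ℝ) (c d : ℝ) (hc : 0 < c)
    (h : ∀ X ∈ S, G₁ X = c * G₂ X + d) : minimizersOn S G₁ = minimizersOn S G₂ := by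
  ext X
  simp only [minimizersOn, Set.mem_setOf_eq, Set.mem_sep_iff]
  constructor
  · rintro ⟨hX, hm⟩
    refine ⟨hX, fun Y hY => ?_⟩
    have := hm Y hY
    rw [h X hX, h Y hY] at this
    nlinarith
  · rintro ⟨hX, hm⟩
    refine ⟨hX, fun Y hY => ?_⟩
    have := hm Y hY
    rw [h X hX, h Y hY]
    nlinarith

lemma trace_J (M N : ℕ) (X : Matrix (Fin M) (Fin N) ℝ) (h : ∀ i, ∑ j, X i j = 1) :
    (Jmat M N * X).trace = M := by
  simp only [Matrix.trace, Matrix.diag, Matrix.mul_apply, Jmat, one_mul]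
  rw [Finset.sum_comm]
  simp [h]

/-- Theorem 1: GNCGCP realizes a convex-concave relaxation procedure. -/
theorem gncgcp_realizes_ccrp (M N : ℕ) (hM : 0 < M) (hMN : M ≤ N)
    (F : Matrix (Fin M) (Fin N) ℝ → ℝ) (lmin lmax : ℝ)
    (hmin : lmin < 0) (hmax : 0 < lmax)
    (Fv Fc : Matrix (Fin M) (Fin N) ℝ → ℝ)
    (hFv : ∀ X, Fv X = F X - lmin * ((Xᵀ * X).trace - (Jmat M N * X).trace))
    (hFc : ∀ X, Fc X = F X - lmax * ((Xᵀ * X).trace - (Jmat M N * X).trace))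
    (ζ : ℝ) (hζl : -lmax / (lmax + 1) ≤ ζ) (hζu : ζ ≤ lmin / (lmin - 1)) :
    ∃ η : ℝ, 0 ≤ η ∧ η ≤ 1 ∧
      minimizersOn (Omega M N) (Fzeta F ζ) =
        minimizersOn (Omega M N) (fun X => (1 - η) * Fv X + η * Fc X) := by
  -- set up the scale `c` and the effective regularization weight `lam`
  have hml : lmin < lmax := hmin.trans hmax
  have hml' : (0:ℝ) < lmax - lmin := by linarith
  obtain ⟨c, lam, hc, hcl, hl1, hl2, hFz⟩ :
      ∃ c lam : ℝ, 0 < c ∧ c * lam = -ζ ∧ lmin ≤ lam ∧ lam ≤ lmax ∧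
        ∀ X, Fzeta F ζ X = c * F X + ζ * (Xᵀ * X).trace := by
    rcases le_or_gt 0 ζ with h0 | h0
    · -- 0 ≤ ζ, use c = 1 - ζ, lam = -ζ/(1-ζ)
      have hden : (0:ℝ) < 1 - lmin := by linarith
      have hu : ζ * (1 - lmin) ≤ -lmin := by
        have : lmin / (lmin - 1) = -lmin / (1 - lmin) := by
          rw [div_eq_div_iff (by linarith) (by linarith)]; ring
        rw [this, le_div_iff₀ hden] at hζu
        linarith
      have hζ1 : ζ < 1 := by nlinarith
      have hc : (0:ℝ) < 1 - ζ := by linarith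
      refine ⟨1 - ζ, -ζ / (1 - ζ), hc, by field_simp, ?_, ?_, ?_⟩
      · rw [le_div_iff₀ hc]; nlinarith
      · calc -ζ / (1 - ζ) ≤ 0 := by
              apply div_nonpos_of_nonpos_of_nonneg <;> linarith
          _ ≤ lmax := hmax.le
      · intro X; simp [Fzeta, h0]
    · -- ζ < 0, use c = 1 + ζ, lam = -ζ/(1+ζ)
      have hden : (0:ℝ) < lmax + 1 := by linarith
      have hu : -lmax ≤ ζ * (lmax + 1) := by
        rw [div_le_iff₀ hden] at hζl; linarith
      have hζ1 : -1 < ζ := by nlinarith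
      have hc : (0:ℝ) < 1 + ζ := by linarith
      refine ⟨1 + ζ, -ζ / (1 + ζ), hc, by field_simp, ?_, ?_, ?_⟩
      · calc lmin ≤ 0 := hmin.le
          _ ≤ -ζ / (1 + ζ) := by
              apply div_nonneg <;> linarith
      · rw [div_le_iff₀ hc]; nlinarith
      · intro X; simp [Fzeta, not_le.mpr h0]
  -- choose η
  refine ⟨(lam - lmin) / (lmax - lmin), div_nonneg (by linarith) hml'.le,
    (div_le_one hml').mpr (by linarith), ?_⟩
  have hηlam : (1 - (lam - lmin) / (lmax - lmin)) * lmin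
      + (lam - lmin) / (lmax - lmin) * lmax = lam := by
    field_simp
    ring
  apply min_congr _ _ _ c (ζ * M) hc
  intro X hX
  obtain ⟨-, hrow, -⟩ := hX
  have hJ : (Jmat M N * X).trace = M := trace_J M N X hrow
  rw [hFz X, hFv X, hFc X, hJ]
  linear_combination c * ((Xᵀ * X).trace - (M:ℝ)) * hηlam
    + ((Xᵀ * X).trace - (M:ℝ)) * hcl
end

section
/- Let H be a real symmetric n×n matrix whose largest eigenvalue λ_max is positive. Then ζ_l := −λ_max/(λ_max + 1) lies in the open interval (−1,0), and for every ζ with −1 ≤ ζ ≤ ζ_l the matrix (1+ζ)·H + ζ·I is negative semidefinite. (Matrix form of Proposition 2.) -/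
open Matrix

/-- Matrix form of Proposition 2: if the largest eigenvalue `lmax` of a real symmetric
matrix `H` is positive, then `ζ_l = -lmax/(lmax+1) ∈ (-1,0)` and `(1+ζ)•H + ζ•I` is
negative semidefinite (i.e. its negation is positive semidefinite) for every
`ζ ∈ [-1, ζ_l]`. -/
theorem graduated_concavity_nsd {n : ℕ} (H : Matrix (Fin n) (Fin n) ℝ)
    (hH : H.IsHermitian) (lmax : ℝ)
    (h_eig : ∃ i, hH.eigenvalues i = lmax)
    (h_ge : ∀ i, hH.eigenvalues i ≤ lmax)
    (hpos : 0 < lmax) :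
    (-1 < -lmax / (lmax + 1) ∧ -lmax / (lmax + 1) < 0) ∧
      ∀ ζ : ℝ, -1 ≤ ζ → ζ ≤ -lmax / (lmax + 1) →
        (-((1 + ζ) • H + ζ • (1 : Matrix (Fin n) (Fin n) ℝ))).PosSemidef := by
  have hl1 : (0:ℝ) < lmax + 1 := by linarith
  constructor
  · constructor
    · rw [lt_div_iff₀ hl1]; nlinarith
    · apply div_neg_of_neg_of_pos <;> linarith
  · intro ζ h1 h2
    have hζ0 : ζ ≤ 0 := le_trans h2 (le_of_lt (by
      apply div_neg_of_neg_of_pos <;> linarith))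
    have hkey : (1 + ζ) * lmax + ζ ≤ 0 := by
      rw [le_div_iff₀ hl1] at h2
      nlinarith
    set U : Matrix (Fin n) (Fin n) ℝ := (hH.eigenvectorUnitary : Matrix (Fin n) (Fin n) ℝ)
    have hU : U * star U = 1 := Matrix.mem_unitaryGroup_iff.mp hH.eigenvectorUnitary.2
    have hspec : H = U * diagonal (RCLike.ofReal ∘ hH.eigenvalues) * star U :=
      hH.spectral_theorem
    have key : U * (-((1+ζ) • diagonal (RCLike.ofReal ∘ hH.eigenvalues) + ζ • 1)) * star U
        = -((1+ζ) • (U * diagonal (RCLike.ofReal ∘ hH.eigenvalues) * star U)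
            + ζ • (1 : Matrix (Fin n) (Fin n) ℝ)) := by
      simp only [Matrix.mul_neg, Matrix.neg_mul, Matrix.mul_add, Matrix.add_mul,
        Matrix.mul_smul, Matrix.smul_mul, Matrix.mul_one, hU]
    rw [← hspec] at key
    rw [← key]
    have hdiag : -((1+ζ) • diagonal (RCLike.ofReal ∘ hH.eigenvalues)
        + ζ • (1 : Matrix (Fin n) (Fin n) ℝ))
        = diagonal (fun i => -((1 + ζ) * hH.eigenvalues i + ζ)) := by
      ext i j
      rcases eq_or_ne i j with h | h
      · subst h; simp
      · simp [Matrix.diagonal_apply_ne _ h, Matrix.one_apply_ne h]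
    rw [hdiag]
    have hst : (star U)ᴴ = U := by
      ext i j
      simp [Matrix.conjTranspose_apply]
    rw [← hst]
    apply Matrix.PosSemidef.mul_mul_conjTranspose_same
    refine Matrix.posSemidef_diagonal_iff.mpr fun i => ?_
    have := h_ge i
    nlinarith [h1, hkey]
end

section
/- Let E be the space of M×N real matrices with the Frobenius inner product, and let F : E → ℝ be twice continuously differentiable. Suppose λ > 0 is a real number such that the second derivative of F satisfies D²F(X)(V,V) ≤ λ·‖V‖² for all X and all directions V (λ is an upper bound on the eigenvalues of the Hessian of F). Then for every ζ with −1 ≤ ζ ≤ −λ/(λ + 2), the function X ↦ (1+ζ)·F(X) + ζ·tr(XᵀX) is concave on E; in particular there exists ζ_l ∈ (−1,0) such that this function is concave whenever −1 ≤ ζ ≤ ζ_l. (Proposition 2: graduated concavity yields a concave relaxation, with the Hessian of tr(XᵀX) equal to 2I.) -/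
open Matrix

attribute [local instance] Matrix.frobeniusNormedAddCommGroup Matrix.frobeniusNormedSpace

private noncomputable instance instCLMNAG {M N : ℕ} :
    NormedAddCommGroup (Matrix (Fin M) (Fin N) ℝ →L[ℝ] ℝ) := ContinuousLinearMap.toNormedAddCommGroup

private noncomputable instance instCLMNS {M N : ℕ} :
    NormedSpace ℝ (Matrix (Fin M) (Fin N) ℝ →L[ℝ] ℝ) := ContinuousLinearMap.toNormedSpace

private lemma key_concave {M N : ℕ}
    (F : Matrix (Fin M) (Fin N) ℝ → ℝ) (hF : ContDiff ℝ 2 F)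
    (lam : ℝ) (hlam : 0 < lam)
    (hbound : ∀ X V : Matrix (Fin M) (Fin N) ℝ,
      iteratedFDeriv ℝ 2 F X ![V, V] ≤ lam * (Vᵀ * V).trace)
    (ζ : ℝ) (hζ1 : -1 ≤ ζ) (hζ2 : ζ ≤ -lam / (lam + 2)) :
    ConcaveOn ℝ Set.univ (fun X : Matrix (Fin M) (Fin N) ℝ =>
        (1 + ζ) * F X + ζ * (Xᵀ * X).trace) := by
  refine ⟨convex_univ, ?_⟩
  intro x _ y _ a b ha hb hab
  set v := y - x with hv
  set A := (xᵀ * x).trace with hA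
  set B := 2 * (xᵀ * v).trace with hB
  set C := (vᵀ * v).trace with hC
  have hvx : (vᵀ * x).trace = (xᵀ * v).trace := by
    rw [← Matrix.trace_transpose (vᵀ * x), Matrix.transpose_mul, Matrix.transpose_transpose]
  have hq : ∀ t : ℝ, (((x + t • v)ᵀ) * (x + t • v)).trace = A + B * t + C * t ^ 2 := by
    intro t
    simp only [Matrix.transpose_add, Matrix.transpose_smul, Matrix.add_mul, Matrix.mul_add,
      Matrix.smul_mul, Matrix.mul_smul, Matrix.trace_add, Matrix.trace_smul, smul_eq_mul,
      smul_smul, hA, hB, hC]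
    rw [hvx]; ring
  set g := fun t : ℝ => (1 + ζ) * F (x + t • v) + ζ * (A + B * t + C * t ^ 2) with hg
  have hF1 : Differentiable ℝ F := hF.differentiable two_ne_zero
  have hF' : ContDiff ℝ 1 (fderiv ℝ F) := hF.fderiv_right (by norm_num)
  have hc : ∀ t : ℝ, HasDerivAt (fun s : ℝ => x + s • v) v t := by
    intro t
    exact (((hasDerivAt_id t).smul_const v).const_add x).congr_deriv (one_smul ℝ v)
  have hd1 : ∀ t : ℝ, HasDerivAt g
      ((1 + ζ) * (fderiv ℝ F (x + t • v) v) + ζ * (B + 2 * C * t)) t := by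
    intro t
    have hFc : HasDerivAt (fun s : ℝ => F (x + s • v)) (fderiv ℝ F (x + t • v) v) t :=
      (hF1 (x + t • v)).hasFDerivAt.comp_hasDerivAt t (hc t)
    have hpoly : HasDerivAt (fun s : ℝ => A + B * s + C * s ^ 2) (B + 2 * C * t) t := by
      have h₁ := ((hasDerivAt_id t).const_mul B).const_add A
      have h₂ := (hasDerivAt_pow 2 t).const_mul C
      exact (h₁.add h₂).congr_deriv (by push_cast; ring)
    exact (hFc.const_mul (1 + ζ)).add (hpoly.const_mul ζ)
  have hd2 : ∀ t : ℝ, HasDerivAt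
      (fun s => (1 + ζ) * (fderiv ℝ F (x + s • v) v) + ζ * (B + 2 * C * s))
      ((1 + ζ) * iteratedFDeriv ℝ 2 F (x + t • v) ![v, v] + ζ * (2 * C)) t := by
    intro t
    have hD : HasDerivAt (fun s : ℝ => fderiv ℝ F (x + s • v))
        (fderiv ℝ (fderiv ℝ F) (x + t • v) v) t :=
      (hF'.differentiable one_ne_zero (x + t • v)).hasFDerivAt.comp_hasDerivAt t (hc t)
    have hDv : HasDerivAt (fun s : ℝ => fderiv ℝ F (x + s • v) v)
        (fderiv ℝ (fderiv ℝ F) (x + t • v) v v) t := by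
      have := hD.clm_apply (hasDerivAt_const t v)
      exact this.congr_deriv ((congrArg _ (map_zero (fderiv ℝ F (x + t • v)))).trans (add_zero _))
    have hiter : iteratedFDeriv ℝ 2 F (x + t • v) ![v, v]
        = fderiv ℝ (fderiv ℝ F) (x + t • v) v v := by
      rw [iteratedFDeriv_two_apply]; simp; rfl
    have hpoly : HasDerivAt (fun s : ℝ => B + 2 * C * s) (2 * C) t := by
      simpa using ((hasDerivAt_id t).const_mul (2 * C)).const_add B
    rw [hiter]
    exact (hDv.const_mul (1 + ζ)).add (hpoly.const_mul ζ)
  have hgderiv : deriv g = fun t =>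
      (1 + ζ) * (fderiv ℝ F (x + t • v) v) + ζ * (B + 2 * C * t) := by
    funext t; exact (hd1 t).deriv
  have h1ζ : 0 ≤ 1 + ζ := by linarith
  have hCpos : 0 ≤ C := by
    rw [hC, Matrix.trace]
    refine Finset.sum_nonneg fun j _ => ?_
    simp only [Matrix.diag_apply, Matrix.mul_apply, Matrix.transpose_apply]
    exact Finset.sum_nonneg fun i _ => mul_self_nonneg _
  have hcoef : (1 + ζ) * lam + 2 * ζ ≤ 0 := by
    have hden : 0 < lam + 2 := by linarith
    rw [le_div_iff₀ hden] at hζ2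
    linarith
  have hgconc : ConcaveOn ℝ Set.univ g := by
    refine concaveOn_univ_of_deriv2_nonpos (fun t => (hd1 t).differentiableAt)
      (by rw [hgderiv]; exact fun t => (hd2 t).differentiableAt) ?_
    intro t
    have h2' : deriv (deriv g) t
        = (1 + ζ) * iteratedFDeriv ℝ 2 F (x + t • v) ![v, v] + ζ * (2 * C) := by
      rw [hgderiv]; exact (hd2 t).deriv
    have : deriv^[2] g t = deriv (deriv g) t := by
      simp [Function.iterate_succ, Function.iterate_zero, Function.comp]
    rw [this, h2']
    have hb' := hbound (x + t • v) v
    have e1 : (1 + ζ) * iteratedFDeriv ℝ 2 F (x + t • v) ![v, v] ≤ (1 + ζ) * (lam * C) := by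
      rw [hC]; exact mul_le_mul_of_nonneg_left (by rw [← hC]; exact hb') h1ζ
    nlinarith [mul_nonneg hCpos (neg_nonneg.mpr hcoef)]
  have hxy' : a • x + b • y = x + b • v := by
    have hA' : a = 1 - b := by linarith
    rw [hA', hv]; module
  have hgG : ∀ t : ℝ, (1 + ζ) * F (x + t • v) + ζ * ((x + t • v)ᵀ * (x + t • v)).trace = g t := by
    intro t; rw [hq t]
  have key := hgconc.2 (Set.mem_univ (0:ℝ)) (Set.mem_univ (1:ℝ)) ha hb hab
  simp only [smul_eq_mul, mul_zero, mul_one, zero_add] at key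
  -- key : a * g 0 + b * g 1 ≤ g b
  have e0 : (1 + ζ) * F x + ζ * (xᵀ * x).trace = g 0 := by
    have := hgG 0; simpa using this
  have e1 : (1 + ζ) * F y + ζ * (yᵀ * y).trace = g 1 := by
    have := hgG 1; simp only [one_smul, hv] at this
    simpa using this
  have eb : (1 + ζ) * F (a • x + b • y) + ζ * ((a • x + b • y)ᵀ * (a • x + b • y)).trace = g b := by
    rw [hxy']; exact hgG b
  simp only [smul_eq_mul]
  rw [e0, e1, eb]
  exact key

/-- Proposition 2: if the Hessian of a C² function `F` on matrices (with the Frobenius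
inner product, so `‖V‖² = tr(VᵀV)`) is bounded above by `λ > 0`, then for every
`ζ ∈ [-1, -λ/(λ+2)]` the function `X ↦ (1+ζ)F(X) + ζ tr(XᵀX)` is concave; in particular
there exists `ζ_l ∈ (-1,0)` such that it is concave whenever `-1 ≤ ζ ≤ ζ_l`. -/
theorem graduated_concavity_concave {M N : ℕ}
    (F : Matrix (Fin M) (Fin N) ℝ → ℝ) (hF : ContDiff ℝ 2 F)
    (lam : ℝ) (hlam : 0 < lam)
    (hbound : ∀ X V : Matrix (Fin M) (Fin N) ℝ,
      iteratedFDeriv ℝ 2 F X ![V, V] ≤ lam * (Vᵀ * V).trace) :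
    (∀ ζ : ℝ, -1 ≤ ζ → ζ ≤ -lam / (lam + 2) →
      ConcaveOn ℝ Set.univ (fun X : Matrix (Fin M) (Fin N) ℝ =>
        (1 + ζ) * F X + ζ * (Xᵀ * X).trace)) ∧
    ∃ ζl : ℝ, -1 < ζl ∧ ζl < 0 ∧ ∀ ζ : ℝ, -1 ≤ ζ → ζ ≤ ζl →
      ConcaveOn ℝ Set.univ (fun X : Matrix (Fin M) (Fin N) ℝ =>
        (1 + ζ) * F X + ζ * (Xᵀ * X).trace) := by
  have hden : (0:ℝ) < lam + 2 := by linarith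
  refine ⟨fun ζ h1 h2 => key_concave F hF lam hlam hbound ζ h1 h2,
    -lam / (lam + 2), ?_, ?_, fun ζ h1 h2 => key_concave F hF lam hlam hbound ζ h1 h2⟩
  · have e : -lam / (lam + 2) = -(lam / (lam + 2)) := neg_div _ _
    have h : lam / (lam + 2) < 1 := by rw [div_lt_one hden]; linarith
    rw [e]; linarith
  · have e : -lam / (lam + 2) = -(lam / (lam + 2)) := neg_div _ _
    have h : 0 < lam / (lam + 2) := div_pos hlam hden
    rw [e]; linarith
end

section
/- Let M ≤ N be positive integers and let G : ℝ^{M×N} → ℝ be continuous and concave on Ω. Then the minimum of G over Ω is attained at some partial permutation matrix: there exists X̂ ∈ Π such that G(X̂) ≤ G(Y) for all Y ∈ Ω. (Content of Lemma 2: minimizing a concave relaxation over Ω yields a discrete solution in Π.) -/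
open Matrix BigOperators

/-- The set Π of M×N partial permutation matrices. -/
def PartialPerm (M N : ℕ) : Set (Matrix (Fin M) (Fin N) ℝ) :=
  {X | (∀ i j, X i j = 0 ∨ X i j = 1) ∧ (∀ i, ∑ j, X i j = 1) ∧ (∀ j, ∑ i, X i j ≤ 1)}

lemma sum_ite_inj {M N : ℕ} {f : Fin M → Fin N} (hf : Function.Injective f) (j : Fin N) :
    ∑ i, (if f i = j then (1:ℝ) else 0) ≤ 1 := by
  rw [Finset.sum_boole]
  have : (Finset.univ.filter fun i => f i = j).card ≤ 1 := by
    apply Finset.card_le_one.mpr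
    intro a ha b hb
    simp only [Finset.mem_filter] at ha hb
    exact hf (ha.2.trans hb.2.symm)
  exact_mod_cast this

lemma partialPerm_subset_omega (M N : ℕ) : PartialPerm M N ⊆ Omega M N := by
  rintro X ⟨h01, hr, hc⟩
  refine ⟨fun i j => ?_, hr, hc⟩
  rcases h01 i j with h | h <;> simp [h]

lemma castLE_mem_partialPerm {M N : ℕ} (hMN : M ≤ N) (g : Fin N → Fin N)
    (hg : Function.Injective g) :
    (fun i j => if g (Fin.castLE hMN i) = j then (1:ℝ) else 0) ∈ PartialPerm M N := by
  refine ⟨fun i j => ?_, fun i => ?_, fun j => ?_⟩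
  · by_cases h : g (Fin.castLE hMN i) = j <;> simp [h]
  · simp
  · exact sum_ite_inj (hg.comp (Fin.castLE_injective hMN)) j

lemma omega_isCompact (M N : ℕ) : IsCompact (Omega M N) := by
  have hsub : Omega M N ⊆ Set.pi Set.univ fun _ : Fin M =>
      Set.pi Set.univ fun _ : Fin N => Set.Icc (0:ℝ) 1 := by
    rintro X ⟨h0, hr, _⟩ i _ j _
    refine ⟨h0 i j, ?_⟩
    calc X i j ≤ ∑ j', X i j' :=
          Finset.single_le_sum (fun j' _ => h0 i j') (Finset.mem_univ j)
      _ = 1 := hr i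
  have hK : IsCompact (Set.pi Set.univ fun _ : Fin M =>
      Set.pi Set.univ fun _ : Fin N => Set.Icc (0:ℝ) 1) :=
    isCompact_univ_pi fun _ => isCompact_univ_pi fun _ => isCompact_Icc
  have hc : ∀ (i : Fin M) (j : Fin N),
      Continuous fun X : Matrix (Fin M) (Fin N) ℝ => X i j :=
    fun i j => (continuous_apply j).comp (continuous_apply i)
  have hclosed : IsClosed (Omega M N) := by
    have h1 : IsClosed {X : Matrix (Fin M) (Fin N) ℝ | ∀ i j, 0 ≤ X i j} := by
      have : {X : Matrix (Fin M) (Fin N) ℝ | ∀ i j, 0 ≤ X i j} =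
          ⋂ i, ⋂ j, {X | 0 ≤ X i j} := by ext X; simp
      rw [this]
      exact isClosed_iInter fun i => isClosed_iInter fun j =>
        isClosed_le continuous_const (hc i j)
    have h2 : IsClosed {X : Matrix (Fin M) (Fin N) ℝ | ∀ i, ∑ j, X i j = 1} := by
      have : {X : Matrix (Fin M) (Fin N) ℝ | ∀ i, ∑ j, X i j = 1} =
          ⋂ i, {X | ∑ j, X i j = 1} := by ext X; simp
      rw [this]
      exact isClosed_iInter fun i =>
        isClosed_eq (by continuity) continuous_const
    have h3 : IsClosed {X : Matrix (Fin M) (Fin N) ℝ | ∀ j, ∑ i, X i j ≤ 1} := by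
      have : {X : Matrix (Fin M) (Fin N) ℝ | ∀ j, ∑ i, X i j ≤ 1} =
          ⋂ j, {X | ∑ i, X i j ≤ 1} := by ext X; simp
      rw [this]
      exact isClosed_iInter fun j =>
        isClosed_le (by continuity) continuous_const
    have : Omega M N = _ ∩ (_ ∩ _) := rfl
    exact (h1.inter (h2.inter h3))
  exact hK.of_isClosed_subset hclosed hsub

/-- Every element of Ω lies in the convex hull of the partial permutation matrices. -/
lemma omega_subset_convexHull {M N : ℕ} (hMN : M ≤ N) {X : Matrix (Fin M) (Fin N) ℝ}
    (hX : X ∈ Omega M N) : X ∈ convexHull ℝ (PartialPerm M N) := by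
  obtain ⟨h0, hr, hc⟩ := hX
  set c : Fin N → ℝ := fun j => ∑ i, X i j with hcdef
  have hcsum : ∑ j, c j = (M : ℝ) := by
    rw [hcdef, Finset.sum_comm]
    simp [hr]
  set B : Matrix (Fin N) (Fin N) ℝ := fun k j =>
    if h : (k : ℕ) < M then X ⟨k, h⟩ j else (1 - c j) / ((N : ℝ) - M) with hBdef
  have hcle : ∀ j, c j ≤ 1 := hc
  have hfilter_sum : ∀ j, ∑ k ∈ Finset.univ.filter (fun k : Fin N => (k : ℕ) < M),
      B k j = c j := by
    intro j
    rw [hcdef]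
    refine Finset.sum_bij' (fun k hk => (⟨(k : ℕ), by simpa using hk⟩ : Fin M))
      (fun i _ => Fin.castLE hMN i) ?_ ?_ ?_ ?_ ?_
    · intro a ha; exact Finset.mem_univ _
    · intro a _; simp [a.is_lt]
    · intro a ha; ext; simp
    · intro a _; ext; simp
    · intro a ha
      simp only [Finset.mem_filter] at ha
      simp only [hBdef, dif_pos ha.2]
  have hcard : (Finset.univ.filter fun k : Fin N => ¬ (k : ℕ) < M).card = N - M := by
    have h1 : (Finset.univ.filter fun k : Fin N => ¬ (k : ℕ) < M).card
        = (Finset.Ico M N).card := by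
      refine Finset.card_bij (fun k _ => (k : ℕ)) ?_ ?_ ?_
      · intro a ha
        simp only [Finset.mem_filter, not_lt] at ha
        simp [Finset.mem_Ico, ha.2, a.is_lt]
      · intro a _ b _ hab; exact Fin.ext hab
      · intro b hb
        simp only [Finset.mem_Ico] at hb
        exact ⟨⟨b, hb.2⟩, by simp [not_lt, hb.1], rfl⟩
    rw [h1, Nat.card_Ico]
  have hB : B ∈ doublyStochastic ℝ (Fin N) := by
    rw [mem_doublyStochastic_iff_sum]
    refine ⟨fun k j => ?_, fun k => ?_, fun j => ?_⟩
    · rw [hBdef]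
      dsimp only
      split
      · exact h0 _ _
      · apply div_nonneg (by linarith [hcle j])
        have : (M : ℝ) ≤ N := Nat.cast_le.mpr hMN
        linarith
    · -- row sums
      by_cases h : (k : ℕ) < M
      · have : ∀ j, B k j = X ⟨k, h⟩ j := fun j => by simp [hBdef, dif_pos h]
        simp only [this]; exact hr _
      · have hlt : M < N := lt_of_le_of_lt (not_lt.mp h) k.is_lt
        have hne : (N : ℝ) - M ≠ 0 := by
          have : (M : ℝ) < N := Nat.cast_lt.mpr hlt
          linarith
        have : ∀ j, B k j = (1 - c j) / ((N : ℝ) - M) := fun j => by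
          simp [hBdef, dif_neg h]
        simp only [this]
        rw [← Finset.sum_div]
        rw [Finset.sum_sub_distrib, hcsum]
        simp [div_eq_one_iff_eq hne]
    · -- column sums
      rw [← Finset.sum_filter_add_sum_filter_not Finset.univ (fun k : Fin N => (k : ℕ) < M),
        hfilter_sum j]
      have hconst : ∑ k ∈ Finset.univ.filter (fun k : Fin N => ¬ (k : ℕ) < M), B k j
          = (N - M : ℕ) * ((1 - c j) / ((N : ℝ) - M)) := by
        rw [Finset.sum_congr rfl (fun k hk => ?_), Finset.sum_const, hcard, nsmul_eq_mul]
        simp only [Finset.mem_filter] at hk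
        simp [hBdef, dif_neg hk.2]
      rw [hconst]
      rcases eq_or_lt_of_le hMN with heq | hlt
      · subst heq; simp
        have : ∀ j', c j' = 1 := by
          by_contra hcon
          push_neg at hcon
          obtain ⟨j', hj'⟩ := hcon
          have hlt' : c j' < 1 := lt_of_le_of_ne (hcle j') hj'
          have : ∑ j'', c j'' < ∑ j'' : Fin M, (1 : ℝ) :=
            Finset.sum_lt_sum (fun k _ => hcle k) ⟨j', Finset.mem_univ _, hlt'⟩
          rw [hcsum] at this
          simp at this
        rw [this j]
      · have hne : (N : ℝ) - M ≠ 0 := by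
          have : (M : ℝ) < N := Nat.cast_lt.mpr hlt
          linarith
        rw [Nat.cast_sub hMN]
        field_simp
        ring
  obtain ⟨w, hw0, hw1, hwsum⟩ := exists_eq_sum_perm_of_mem_doublyStochastic hB
  have hXeq : X = ∑ σ : Equiv.Perm (Fin N), w σ •
      (fun i j => if σ (Fin.castLE hMN i) = j then (1:ℝ) else 0) := by
    funext i j
    have h1 := congrFun (congrFun hwsum (Fin.castLE hMN i)) j
    have hBij : B (Fin.castLE hMN i) j = X i j := by
      simp only [hBdef]
      rw [dif_pos (show ((Fin.castLE hMN i : Fin N) : ℕ) < M from i.is_lt)]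
      rfl
    rw [← hBij, ← h1]
    simp only [Finset.sum_apply, Matrix.sum_apply, Pi.smul_apply, Matrix.smul_apply,
      smul_eq_mul, Equiv.Perm.permMatrix, PEquiv.toMatrix_apply, Equiv.toPEquiv_apply,
      Option.mem_def, Option.some.injEq]
  rw [hXeq]
  exact mem_convexHull_of_exists_fintype w
    (fun σ : Equiv.Perm (Fin N) =>
      (fun i j => if σ (Fin.castLE hMN i) = j then (1:ℝ) else 0)) hw0 hw1
    (fun σ => castLE_mem_partialPerm hMN σ σ.injective) rfl

/-- Lemma 2: a continuous concave function on Ω attains its minimum over Ω at some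
partial permutation matrix. -/
theorem concave_min_attained_at_partial_perm (M N : ℕ) (hM : 0 < M) (hMN : M ≤ N)
    (G : Matrix (Fin M) (Fin N) ℝ → ℝ)
    (hcont : ContinuousOn G (Omega M N))
    (hconc : ConcaveOn ℝ (Omega M N) G) :
    ∃ X ∈ PartialPerm M N, ∀ Y ∈ Omega M N, G X ≤ G Y := by
  have hne : (Omega M N).Nonempty :=
    ⟨_, partialPerm_subset_omega M N (castLE_mem_partialPerm hMN id Function.injective_id)⟩
  obtain ⟨X₀, hX₀, hmin⟩ := (omega_isCompact M N).exists_isMinOn hne hcont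
  obtain ⟨P, hP, hPle⟩ := hconc.exists_le_of_mem_convexHull
    (partialPerm_subset_omega M N) (omega_subset_convexHull hMN hX₀)
  exact ⟨P, hP, fun Y hY => hPle.trans (hmin hY)⟩
end

section
/- Let M ≤ N be positive integers. The set Ω of doubly sub-stochastic matrices with unit row sums is the convex hull of the set Π of partial permutation matrices: Ω = conv(Π). -/
open Matrix BigOperators

lemma mem_map_castLEEmb_iff {M N : ℕ} (hMN : M ≤ N) (i : Fin N) :
    i ∈ Finset.univ.map (Fin.castLEEmb hMN) ↔ (i : ℕ) < M := by
  simp only [Finset.mem_map, Finset.mem_univ, true_and]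
  constructor
  · rintro ⟨a, rfl⟩; exact a.isLt
  · intro h; exact ⟨⟨i, h⟩, rfl⟩

lemma sum_split {M N : ℕ} (hMN : M ≤ N) (f : Fin N → ℝ) :
    ∑ i, f i = (∑ i : Fin M, f (Fin.castLE hMN i)) +
      ∑ i ∈ (Finset.univ.map (Fin.castLEEmb hMN))ᶜ, f i := by
  rw [← Finset.sum_add_sum_compl (Finset.univ.map (Fin.castLEEmb hMN)) f, Finset.sum_map]
  rfl

lemma convex_Omega (M N : ℕ) : Convex ℝ (Omega M N) := by
  rintro x ⟨hx0, hx1, hx2⟩ y ⟨hy0, hy1, hy2⟩ a b ha hb hab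
  refine ⟨fun i j => ?_, fun i => ?_, fun j => ?_⟩
  · simp only [Matrix.add_apply, Matrix.smul_apply, smul_eq_mul]
    exact add_nonneg (mul_nonneg ha (hx0 i j)) (mul_nonneg hb (hy0 i j))
  · simp only [Matrix.add_apply, Matrix.smul_apply, smul_eq_mul]
    rw [Finset.sum_add_distrib, ← Finset.mul_sum, ← Finset.mul_sum, hx1, hy1]
    simpa using hab
  · simp only [Matrix.add_apply, Matrix.smul_apply, smul_eq_mul]
    rw [Finset.sum_add_distrib, ← Finset.mul_sum, ← Finset.mul_sum]
    calc a * ∑ i, x i j + b * ∑ i, y i j ≤ a * 1 + b * 1 := by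
          gcongr
          · exact hx2 j
          · exact hy2 j
      _ = 1 := by simpa using hab

/-- Ω is the convex hull of the set of partial permutation matrices. -/
theorem omega_eq_convexHull_partialPerm (M N : ℕ) (hM : 0 < M) (hMN : M ≤ N) :
    Omega M N = convexHull ℝ (PartialPerm M N) := by
  apply Set.Subset.antisymm
  · -- hard direction
    rintro X ⟨hX0, hX1, hX2⟩
    -- column sums
    set c : Fin N → ℝ := fun j => ∑ i, X i j with hc
    have hcsum : ∑ j, c j = (M : ℝ) := by
      simp only [hc]
      rw [Finset.sum_comm]
      simp [hX1]
    have h1csum : ∑ j, (1 - c j) = (N : ℝ) - M := by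
      rw [Finset.sum_sub_distrib, hcsum]
      simp [Finset.card_univ]
    -- extend to an N×N doubly stochastic matrix
    set E : Matrix (Fin N) (Fin N) ℝ := fun i j =>
      if h : (i : ℕ) < M then X ⟨i, h⟩ j else (1 - c j) / ((N : ℝ) - M) with hE
    have hNMpos : ∀ i : Fin N, ¬ (i : ℕ) < M → (0 : ℝ) < (N : ℝ) - M := by
      intro i hi
      have : M < N := lt_of_le_of_lt (le_of_not_gt hi) i.isLt
      have : (M : ℝ) < N := by exact_mod_cast this
      linarith
    have hEds : E ∈ doublyStochastic ℝ (Fin N) := by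
      rw [mem_doublyStochastic_iff_sum]
      refine ⟨fun i j => ?_, fun i => ?_, fun j => ?_⟩
      · simp only [hE]
        split_ifs with h
        · exact hX0 _ _
        · exact div_nonneg (by linarith [hX2 j]) (hNMpos i h).le
      · by_cases h : (i : ℕ) < M
        · simp only [hE, dif_pos h]
          exact hX1 ⟨i, h⟩
        · simp only [hE, dif_neg h]
          rw [← Finset.sum_div, h1csum]
          exact div_self (hNMpos i h).ne'
      · rw [sum_split hMN]
        have h1 : (∑ i : Fin M, E (Fin.castLE hMN i) j) = c j := by
          apply Finset.sum_congr rfl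
          intro i _
          simp only [hE]
          rw [dif_pos (by exact i.isLt)]
          rfl
        have h2 : ∀ i ∈ (Finset.univ.map (Fin.castLEEmb hMN))ᶜ,
            E i j = (1 - c j) / ((N : ℝ) - M) := by
          intro i hi
          rw [Finset.mem_compl, mem_map_castLEEmb_iff] at hi
          simp only [hE, dif_neg hi]
        rw [h1, Finset.sum_congr rfl h2, Finset.sum_const]
        have hcard : ((Finset.univ.map (Fin.castLEEmb hMN))ᶜ).card = N - M := by
          rw [Finset.card_compl, Finset.card_map]
          simp
        rw [hcard]
        rcases lt_or_eq_of_le hMN with hlt | heq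
        · have hne : ((N : ℝ) - M) ≠ 0 := by
            have : (M : ℝ) < N := by exact_mod_cast hlt
            linarith
          rw [nsmul_eq_mul]
          have : ((N - M : ℕ) : ℝ) = (N : ℝ) - M := by
            rw [Nat.cast_sub hMN]
          rw [this, mul_div_cancel₀ _ hne]
          ring
        · -- M = N : every column sum is 1
          have hcj : c j = 1 := by
            have hzero : ∑ j, (1 - c j) = 0 := by
              rw [h1csum, heq]; ring
            have := (Finset.sum_eq_zero_iff_of_nonneg
              (fun j _ => by linarith [hX2 j] : ∀ j ∈ Finset.univ, (0:ℝ) ≤ 1 - c j)).mp hzero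
            have := this j (Finset.mem_univ j)
            linarith
          rw [heq, Nat.sub_self, zero_smul, add_zero, hcj]
    -- truncation linear map
    let T : Matrix (Fin N) (Fin N) ℝ →ₗ[ℝ] Matrix (Fin M) (Fin N) ℝ :=
      { toFun := fun A => Matrix.of fun i j => A (Fin.castLE hMN i) j
        map_add' := fun A B => rfl
        map_smul' := fun r A => rfl }
    have hTX : T E = X := by
      ext i j
      show E (Fin.castLE hMN i) j = X i j
      simp only [T, LinearMap.coe_mk, AddHom.coe_mk, Matrix.of_apply, hE]
      rw [dif_pos (by exact i.isLt)]
      rfl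
    have hEhull : E ∈ convexHull ℝ {σ.permMatrix ℝ | σ : Equiv.Perm (Fin N)} := by
      rw [← doublyStochastic_eq_convexHull_permMatrix]
      exact hEds
    have himg : T '' (convexHull ℝ {σ.permMatrix ℝ | σ : Equiv.Perm (Fin N)}) =
        convexHull ℝ (T '' {σ.permMatrix ℝ | σ : Equiv.Perm (Fin N)}) :=
      T.image_convexHull _
    have hXmem : X ∈ convexHull ℝ (T '' {σ.permMatrix ℝ | σ : Equiv.Perm (Fin N)}) := by
      rw [← himg]
      exact ⟨E, hEhull, hTX⟩
    refine convexHull_mono ?_ hXmem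
    rintro P ⟨A, ⟨σ, rfl⟩, rfl⟩
    have hentry : ∀ (i : Fin M) (j : Fin N),
        T (σ.permMatrix ℝ) i j = if σ (Fin.castLE hMN i) = j then (1:ℝ) else 0 := by
      intro i j
      show (σ.permMatrix ℝ) (Fin.castLE hMN i) j = _
      simp [T, Equiv.Perm.permMatrix, PEquiv.toMatrix_apply, Equiv.toPEquiv_apply,
        Option.mem_def, eq_comm]
    refine ⟨fun i j => ?_, fun i => ?_, fun j => ?_⟩
    · rw [hentry]
      split_ifs <;> simp
    · simp only [hentry]
      simp
    · have key : (∑ i : Fin M, if σ (Fin.castLE hMN i) = j then (1:ℝ) else 0)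
          ≤ ∑ i : Fin N, if σ i = j then (1:ℝ) else 0 := by
        calc (∑ i : Fin M, if σ (Fin.castLE hMN i) = j then (1:ℝ) else 0)
            = ∑ i ∈ Finset.univ.map (Fin.castLEEmb hMN), (if σ i = j then (1:ℝ) else 0) :=
              (Finset.sum_map Finset.univ (Fin.castLEEmb hMN)
                (fun i => if σ i = j then (1:ℝ) else 0)).symm
          _ ≤ ∑ i : Fin N, if σ i = j then (1:ℝ) else 0 := by
              apply Finset.sum_le_sum_of_subset_of_nonneg (Finset.subset_univ _)
              intro i _ _
              split_ifs <;> simp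
      have hone : ∑ i : Fin N, (if σ i = j then (1:ℝ) else 0) = 1 := by
        rw [Finset.sum_eq_single (σ.symm j)]
        · simp
        · intro b _ hb
          rw [if_neg]
          intro h
          exact hb (by rw [← h]; simp)
        · simp
      simp only [hentry]
      exact key.trans_eq hone
  · -- conv(Π) ⊆ Ω
    apply convexHull_min ?_ (convex_Omega M N)
    rintro P ⟨h01, hrow, hcol⟩
    exact ⟨fun i j => by rcases h01 i j with h | h <;> simp [h], hrow, hcol⟩
end
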